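/- arXiv:1405.0735 — 3 statements merged into one kernel-verified Lean document; each statement's English description precedes it below -/
import Mathlib

section
/- (Theorem 3, stability of the SBP-FD junction for the advection equation, conforming grids) Suppose that in the SBP-FD junction semi-discretization of the advection equation the operators I_w^w, I_u^u, I_v^v are identity matrices, the interpolation compatibility relation holds (I^{w,u} = P_{x,w}^{-1}(I_w^u)^T P_{x,u} and I^{w,v} = P_{x,w}^{-1}(I_w^v)^T P_{x,v}), and the penalty parameters are chosen as τ_w = -a_2/2 and τ_{uv} = a_2/2. If w : [0,∞) → ℝ^{n_{x,w} n_{y,w}}, u : [0,∞) → ℝ^{n_{x,u} n_{y,u}}, v : [0,∞) → ℝ^{n_{x,v} n_{y,v}} are differentiable and satisfy the semi-discrete system for all t ≥ 0, then for every t ≥ 0 one has the energy conservation equality ‖w(t)‖²_{P_w} + ‖u(t)‖²_{P_u} + ‖v(t)‖²_{P_v} = ‖w(0)‖²_{P_w} + ‖u(0)‖²_{P_u} + ‖v(0)‖²_{P_v}. -/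
open Matrix
open scoped Kronecker

noncomputable section

/-- The first standard basis vector `e₀ = (1,0,…,0)ᵀ` of `ℝ^(l+1)`. -/
def e0v (l : ℕ) : Fin (l + 1) → ℝ := Pi.single 0 1

/-- The last standard basis vector `e_N = (0,…,0,1)ᵀ` of `ℝ^(l+1)`. -/
def eNv (l : ℕ) : Fin (l + 1) → ℝ := Pi.single (Fin.last l) 1

/-- The SBP energy `‖f‖²_P = fᵀ (Px ⊗ Py) f` of a real grid function. -/
def energyR {a b : Type*} [Fintype a] [Fintype b]
    (Px : Matrix a a ℝ) (Py : Matrix b b ℝ) (f : a × b → ℝ) : ℝ :=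
  dotProduct f ((Px ⊗ₖ Py).mulVec f)


section Helpers

variable {n m : Type*} [Fintype n] [Fintype m]

private lemma isDiagTransposeEq {A : Matrix n n ℝ} (h : A.IsDiag) : Aᵀ = A := by
  ext i j
  rcases eq_or_ne i j with rfl | hij
  · rfl
  · rw [Matrix.transpose_apply, h hij.symm, h hij]

private lemma dotMulVecSwap (M : Matrix m n ℝ) (x : m → ℝ) (y : n → ℝ) :
    x ⬝ᵥ (M *ᵥ y) = y ⬝ᵥ (Mᵀ *ᵥ x) := by
  rw [Matrix.dotProduct_mulVec, Matrix.mulVec_transpose, dotProduct_comm]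

private lemma pairEq {M : Matrix n n ℝ} (hM : Mᵀ = M) (x y : n → ℝ) :
    x ⬝ᵥ (M *ᵥ y) + y ⬝ᵥ (M *ᵥ x) = 2 * (y ⬝ᵥ (M *ᵥ x)) := by
  rw [dotMulVecSwap, hM, two_mul]

private lemma twoQuad (M : Matrix n n ℝ) (x : n → ℝ) :
    2 * (x ⬝ᵥ (M *ᵥ x)) = x ⬝ᵥ ((M + Mᵀ) *ᵥ x) := by
  rw [Matrix.add_mulVec, dotProduct_add, two_mul]
  congr 1
  exact dotMulVecSwap M x x

private lemma kroneckerNeg {l p : Type*} (A : Matrix n m ℝ) (B : Matrix l p ℝ) :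
    A ⊗ₖ (-B) = -(A ⊗ₖ B) := by
  ext i j
  simp [mul_neg]

private lemma vecMulVecTranspose (a : n → ℝ) (b : m → ℝ) :
    (Matrix.vecMulVec a b)ᵀ = Matrix.vecMulVec b a := by
  ext i j
  simp [Matrix.vecMulVec_apply, mul_comm]

private lemma hasDerivAt_quadR (M : Matrix n n ℝ) {f : ℝ → n → ℝ} {f' : n → ℝ} {t : ℝ}
    (hf : HasDerivAt f f' t) :
    HasDerivAt (fun s => f s ⬝ᵥ (M *ᵥ f s)) (f' ⬝ᵥ (M *ᵥ f t) + f t ⬝ᵥ (M *ᵥ f')) t := by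
  have hc : ∀ i, HasDerivAt (fun s => f s i) (f' i) t := fun i => hasDerivAt_pi.1 hf i
  have key : HasDerivAt (fun s => ∑ i, ∑ j, f s i * (M i j * f s j))
      (∑ i, ∑ j, (f' i * (M i j * f t j) + f t i * (M i j * f' j))) t := by
    apply HasDerivAt.fun_sum
    intro i _
    apply HasDerivAt.fun_sum
    intro j _
    exact (hc i).mul ((hc j).const_mul (M i j))
  convert key using 1
  · ext s
    simp [dotProduct, Matrix.mulVec, Finset.mul_sum]
  · simp [dotProduct, Matrix.mulVec, Finset.mul_sum, Finset.sum_add_distrib]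

end Helpers

/-- (Theorem 3: stability of the SBP-FD junction for the advection equation,
conforming grids.) With identity operators `I_w^w, I_u^u, I_v^v`, the interpolation
compatibility relation, and penalty parameters `τ_w = -a₂/2`, `τ_{uv} = a₂/2`, every
solution of the SBP-FD junction semi-discretization of `U_t = a₁ U_x + a₂ U_y`
conserves the discrete energy. -/
theorem sbp_fd_junction_advection_conforming_stability
    (kw lw ku lu kv lv : ℕ) (a1 a2 : ℝ)
    (Pxw : Matrix (Fin (kw + 1)) (Fin (kw + 1)) ℝ)
    (Pyw : Matrix (Fin (lw + 1)) (Fin (lw + 1)) ℝ)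
    (Pxu : Matrix (Fin (ku + 1)) (Fin (ku + 1)) ℝ)
    (Pyu : Matrix (Fin (lu + 1)) (Fin (lu + 1)) ℝ)
    (Pxv : Matrix (Fin (kv + 1)) (Fin (kv + 1)) ℝ)
    (Pyv : Matrix (Fin (lv + 1)) (Fin (lv + 1)) ℝ)
    (hPxw : Pxw.IsDiag) (hPxwP : Pxw.PosDef)
    (hPyw : Pyw.IsDiag) (hPywP : Pyw.PosDef)
    (hPxu : Pxu.IsDiag) (hPxuP : Pxu.PosDef)
    (hPyu : Pyu.IsDiag) (hPyuP : Pyu.PosDef)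
    (hPxv : Pxv.IsDiag) (hPxvP : Pxv.PosDef)
    (hPyv : Pyv.IsDiag) (hPyvP : Pyv.PosDef)
    (Qxw : Matrix (Fin (kw + 1)) (Fin (kw + 1)) ℝ)
    (Qyw : Matrix (Fin (lw + 1)) (Fin (lw + 1)) ℝ)
    (Qxu : Matrix (Fin (ku + 1)) (Fin (ku + 1)) ℝ)
    (Qyu : Matrix (Fin (lu + 1)) (Fin (lu + 1)) ℝ)
    (Qxv : Matrix (Fin (kv + 1)) (Fin (kv + 1)) ℝ)
    (Qyv : Matrix (Fin (lv + 1)) (Fin (lv + 1)) ℝ)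
    (hQxw : Qxw + Qxwᵀ = 0) (hQxu : Qxu + Qxuᵀ = 0) (hQxv : Qxv + Qxvᵀ = 0)
    (hQyw : Qyw + Qywᵀ = -vecMulVec (e0v lw) (e0v lw))
    (hQyu : Qyu + Qyuᵀ = vecMulVec (eNv lu) (eNv lu))
    (hQyv : Qyv + Qyvᵀ = vecMulVec (eNv lv) (eNv lv))
    (Iww : Matrix (Fin (kw + 1)) (Fin (kw + 1)) ℝ)
    (Iuu : Matrix (Fin (ku + 1)) (Fin (ku + 1)) ℝ)
    (Ivv : Matrix (Fin (kv + 1)) (Fin (kv + 1)) ℝ)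
    (hIww : Iww = 1) (hIuu : Iuu = 1) (hIvv : Ivv = 1)
    (Iwu : Matrix (Fin (ku + 1)) (Fin (kw + 1)) ℝ)
    (Iwv : Matrix (Fin (kv + 1)) (Fin (kw + 1)) ℝ)
    (Iwu' : Matrix (Fin (kw + 1)) (Fin (ku + 1)) ℝ)
    (Iwv' : Matrix (Fin (kw + 1)) (Fin (kv + 1)) ℝ)
    (hIwu' : Iwu' = Pxw⁻¹ * Iwuᵀ * Pxu)
    (hIwv' : Iwv' = Pxw⁻¹ * Iwvᵀ * Pxv)
    (τw τuv : ℝ) (hτw : τw = -a2 / 2) (hτuv : τuv = a2 / 2)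
    (w : ℝ → (Fin (kw + 1) × Fin (lw + 1) → ℝ))
    (u : ℝ → (Fin (ku + 1) × Fin (lu + 1) → ℝ))
    (v : ℝ → (Fin (kv + 1) × Fin (lv + 1) → ℝ))
    (hw : ∀ t : ℝ, 0 ≤ t → HasDerivAt w
      ((a1 • ((Pxw⁻¹ * Qxw) ⊗ₖ (1 : Matrix (Fin (lw + 1)) (Fin (lw + 1)) ℝ))
          + a2 • ((1 : Matrix (Fin (kw + 1)) (Fin (kw + 1)) ℝ) ⊗ₖ (Pyw⁻¹ * Qyw))).mulVec (w t)
        - τw • ((1 : Matrix (Fin (kw + 1)) (Fin (kw + 1)) ℝ) ⊗ₖ Pyw⁻¹).mulVec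
            ((Iww ⊗ₖ vecMulVec (e0v lw) (e0v lw)).mulVec (w t)
              - (Iwu' ⊗ₖ vecMulVec (e0v lw) (eNv lu)).mulVec (u t)
              - (Iwv' ⊗ₖ vecMulVec (e0v lw) (eNv lv)).mulVec (v t))) t)
    (hu : ∀ t : ℝ, 0 ≤ t → HasDerivAt u
      ((a1 • ((Pxu⁻¹ * Qxu) ⊗ₖ (1 : Matrix (Fin (lu + 1)) (Fin (lu + 1)) ℝ))
          + a2 • ((1 : Matrix (Fin (ku + 1)) (Fin (ku + 1)) ℝ) ⊗ₖ (Pyu⁻¹ * Qyu))).mulVec (u t)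
        - τuv • ((1 : Matrix (Fin (ku + 1)) (Fin (ku + 1)) ℝ) ⊗ₖ Pyu⁻¹).mulVec
            ((Iuu ⊗ₖ vecMulVec (eNv lu) (eNv lu)).mulVec (u t)
              - (Iwu ⊗ₖ vecMulVec (eNv lu) (e0v lw)).mulVec (w t))) t)
    (hv : ∀ t : ℝ, 0 ≤ t → HasDerivAt v
      ((a1 • ((Pxv⁻¹ * Qxv) ⊗ₖ (1 : Matrix (Fin (lv + 1)) (Fin (lv + 1)) ℝ))
          + a2 • ((1 : Matrix (Fin (kv + 1)) (Fin (kv + 1)) ℝ) ⊗ₖ (Pyv⁻¹ * Qyv))).mulVec (v t)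
        - τuv • ((1 : Matrix (Fin (kv + 1)) (Fin (kv + 1)) ℝ) ⊗ₖ Pyv⁻¹).mulVec
            ((Ivv ⊗ₖ vecMulVec (eNv lv) (eNv lv)).mulVec (v t)
              - (Iwv ⊗ₖ vecMulVec (eNv lv) (e0v lw)).mulVec (w t))) t) :
    ∀ t : ℝ, 0 ≤ t →
      energyR Pxw Pyw (w t) + energyR Pxu Pyu (u t) + energyR Pxv Pyv (v t)
        = energyR Pxw Pyw (w 0) + energyR Pxu Pyu (u 0) + energyR Pxv Pyv (v 0)  := by
  subst hIww hIuu hIvv hIwu' hIwv' hτw hτuv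
  have hPxwU : Pxw * Pxw⁻¹ = 1 := Matrix.mul_nonsing_inv _ (isUnit_iff_ne_zero.2 hPxwP.det_pos.ne')
  have hPxuU : Pxu * Pxu⁻¹ = 1 := Matrix.mul_nonsing_inv _ (isUnit_iff_ne_zero.2 hPxuP.det_pos.ne')
  have hPxvU : Pxv * Pxv⁻¹ = 1 := Matrix.mul_nonsing_inv _ (isUnit_iff_ne_zero.2 hPxvP.det_pos.ne')
  have hPywU : Pyw * Pyw⁻¹ = 1 := Matrix.mul_nonsing_inv _ (isUnit_iff_ne_zero.2 hPywP.det_pos.ne')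
  have hPyuU : Pyu * Pyu⁻¹ = 1 := Matrix.mul_nonsing_inv _ (isUnit_iff_ne_zero.2 hPyuP.det_pos.ne')
  have hPyvU : Pyv * Pyv⁻¹ = 1 := Matrix.mul_nonsing_inv _ (isUnit_iff_ne_zero.2 hPyvP.det_pos.ne')
  have hPxwT : Pxwᵀ = Pxw := isDiagTransposeEq hPxw
  have hPxuT : Pxuᵀ = Pxu := isDiagTransposeEq hPxu
  have hPxvT : Pxvᵀ = Pxv := isDiagTransposeEq hPxv
  have hPywT : Pywᵀ = Pyw := isDiagTransposeEq hPyw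
  have hPyuT : Pyuᵀ = Pyu := isDiagTransposeEq hPyu
  have hPyvT : Pyvᵀ = Pyv := isDiagTransposeEq hPyv
  have hPwT : (Pxw ⊗ₖ Pyw)ᵀ = Pxw ⊗ₖ Pyw := by
    rw [← Matrix.kroneckerMap_transpose, hPxwT, hPywT]
  have hPuT : (Pxu ⊗ₖ Pyu)ᵀ = Pxu ⊗ₖ Pyu := by
    rw [← Matrix.kroneckerMap_transpose, hPxuT, hPyuT]
  have hPvT : (Pxv ⊗ₖ Pyv)ᵀ = Pxv ⊗ₖ Pyv := by
    rw [← Matrix.kroneckerMap_transpose, hPxvT, hPyvT]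
  have hderiv : ∀ s : ℝ, 0 ≤ s → HasDerivAt
      (fun r : ℝ => energyR Pxw Pyw (w r) + energyR Pxu Pyu (u r) + energyR Pxv Pyv (v r)) 0 s := by
    intro s hs
    have h1 := hasDerivAt_quadR (Pxw ⊗ₖ Pyw) (hw s hs)
    have h2 := hasDerivAt_quadR (Pxu ⊗ₖ Pyu) (hu s hs)
    have h3 := hasDerivAt_quadR (Pxv ⊗ₖ Pyv) (hv s hs)
    have hsum := (h1.add h2).add h3
    have f1 : w s ⬝ᵥ ((Qxw ⊗ₖ Pyw) *ᵥ w s) = 0 := by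
      have h := twoQuad (Qxw ⊗ₖ Pyw) (w s)
      rw [← Matrix.kroneckerMap_transpose, hPywT, ← Matrix.add_kronecker, hQxw,
        Matrix.zero_kronecker, Matrix.zero_mulVec, dotProduct_zero] at h
      linarith
    have f1u : u s ⬝ᵥ ((Qxu ⊗ₖ Pyu) *ᵥ u s) = 0 := by
      have h := twoQuad (Qxu ⊗ₖ Pyu) (u s)
      rw [← Matrix.kroneckerMap_transpose, hPyuT, ← Matrix.add_kronecker, hQxu,
        Matrix.zero_kronecker, Matrix.zero_mulVec, dotProduct_zero] at h
      linarith
    have f1v : v s ⬝ᵥ ((Qxv ⊗ₖ Pyv) *ᵥ v s) = 0 := by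
      have h := twoQuad (Qxv ⊗ₖ Pyv) (v s)
      rw [← Matrix.kroneckerMap_transpose, hPyvT, ← Matrix.add_kronecker, hQxv,
        Matrix.zero_kronecker, Matrix.zero_mulVec, dotProduct_zero] at h
      linarith
    have f2 : 2 * (w s ⬝ᵥ ((Pxw ⊗ₖ Qyw) *ᵥ w s))
        = -(w s ⬝ᵥ ((Pxw ⊗ₖ vecMulVec (e0v lw) (e0v lw)) *ᵥ w s)) := by
      have h := twoQuad (Pxw ⊗ₖ Qyw) (w s)
      rw [← Matrix.kroneckerMap_transpose, hPxwT, ← Matrix.kronecker_add, hQyw,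
        kroneckerNeg, Matrix.neg_mulVec, dotProduct_neg] at h
      exact h
    have f3 : 2 * (u s ⬝ᵥ ((Pxu ⊗ₖ Qyu) *ᵥ u s))
        = u s ⬝ᵥ ((Pxu ⊗ₖ vecMulVec (eNv lu) (eNv lu)) *ᵥ u s) := by
      have h := twoQuad (Pxu ⊗ₖ Qyu) (u s)
      rw [← Matrix.kroneckerMap_transpose, hPxuT, ← Matrix.kronecker_add, hQyu] at h
      exact h
    have f4 : 2 * (v s ⬝ᵥ ((Pxv ⊗ₖ Qyv) *ᵥ v s))
        = v s ⬝ᵥ ((Pxv ⊗ₖ vecMulVec (eNv lv) (eNv lv)) *ᵥ v s) := by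
      have h := twoQuad (Pxv ⊗ₖ Qyv) (v s)
      rw [← Matrix.kroneckerMap_transpose, hPxvT, ← Matrix.kronecker_add, hQyv] at h
      exact h
    have f5 : w s ⬝ᵥ (((Iwuᵀ * Pxu) ⊗ₖ vecMulVec (e0v lw) (eNv lu)) *ᵥ u s)
        = u s ⬝ᵥ (((Pxu * Iwu) ⊗ₖ vecMulVec (eNv lu) (e0v lw)) *ᵥ w s) := by
      rw [dotMulVecSwap, ← Matrix.kroneckerMap_transpose, Matrix.transpose_mul,
        Matrix.transpose_transpose, hPxuT, vecMulVecTranspose]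
    have f6 : w s ⬝ᵥ (((Iwvᵀ * Pxv) ⊗ₖ vecMulVec (e0v lw) (eNv lv)) *ᵥ v s)
        = v s ⬝ᵥ (((Pxv * Iwv) ⊗ₖ vecMulVec (eNv lv) (e0v lw)) *ᵥ w s) := by
      rw [dotMulVecSwap, ← Matrix.kroneckerMap_transpose, Matrix.transpose_mul,
        Matrix.transpose_transpose, hPxvT, vecMulVecTranspose]
    refine hsum.congr_deriv ?_
    rw [pairEq hPwT, pairEq hPuT, pairEq hPvT]
    simp only [Matrix.mulVec_sub, Matrix.mulVec_add, Matrix.mulVec_smul, Matrix.add_mulVec,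
      Matrix.smul_mulVec, Matrix.mulVec_mulVec, ← Matrix.mul_kronecker_mul,
      ← Matrix.mul_assoc, hPxwU, hPxuU, hPxvU, hPywU, hPyuU, hPyvU,
      Matrix.mul_one, Matrix.one_mul, dotProduct_sub, dotProduct_add, dotProduct_smul,
      smul_eq_mul]
    linear_combination 2 * a1 * f1 + 2 * a1 * f1u + 2 * a1 * f1v
      + a2 * f2 + a2 * f3 + a2 * f4 - a2 * f5 - a2 * f6
  intro t ht
  have hcont : ContinuousOn
      (fun r : ℝ => energyR Pxw Pyw (w r) + energyR Pxu Pyu (u r) + energyR Pxv Pyv (v r))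
      (Set.Icc 0 t) :=
    fun x hx => ((hderiv x hx.1).differentiableAt.continuousAt).continuousWithinAt
  have h := constant_of_has_deriv_right_zero hcont
    (fun x hx => (hderiv x hx.1).hasDerivWithinAt)
  exact h t (Set.right_mem_Icc.2 ht)

end
end

section
/- (Theorem 4, stability of the SBP-FD junction for the advection equation, nonconforming grids) Suppose there are positive integers m_u, m_v, diagonal positive-definite 'coarse' norm matrices P^c_{x,u} ∈ ℝ^{m_u×m_u}, P^c_{x,v} ∈ ℝ^{m_v×m_v}, coarse interpolation matrices J_w^u ∈ ℝ^{m_u×n_{x,w}}, J_w^v ∈ ℝ^{m_v×n_{x,w}}, J^{w,u} ∈ ℝ^{n_{x,w}×m_u}, J^{w,v} ∈ ℝ^{n_{x,w}×m_v} satisfying J^{w,u} = P_{x,w}^{-1}(J_w^u)^T P^c_{x,u} and J^{w,v} = P_{x,w}^{-1}(J_w^v)^T P^c_{x,v}, and grid-transfer matrices I^u_{c2f} ∈ ℝ^{n_{x,u}×m_u}, I^u_{f2c} ∈ ℝ^{m_u×n_{x,u}}, I^v_{c2f} ∈ ℝ^{n_{x,v}×m_v}, I^v_{f2c} ∈ ℝ^{m_v×n_{x,v}}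 satisfying P^c_{x,u} I^u_{f2c} = (I^u_{c2f})^T P_{x,u} and P^c_{x,v} I^v_{f2c} = (I^v_{c2f})^T P_{x,v}. Take as interpolation operators of the SBP-FD junction semi-discretization of the advection equation the nonconforming operators I_w^u = I^u_{c2f} J_w^u, I^{w,u} = J^{w,u} I^u_{f2c}, I_w^v = I^v_{c2f} J_w^v, I^{w,v} = J^{w,v} I^v_{f2c}, with I_w^w, I_u^u, I_v^v identity matrices and penalty parameters τ_w = -a_2/2, τ_{uv} = a_2/2. Then every triple of differentiable functions w, u, v satisfying the semi-discrete system for all t ≥ 0 obeys the energy conservation equality ‖w(t)‖²_{P_w} + ‖u(t)‖²_{P_u} + ‖v(t)‖²_{P_v} = ‖w(0)‖²_{P_w} + ‖u(0)‖²_{P_u} + ‖v(0)‖²_{P_v} for all t ≥ 0. -/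
open Matrix
open scoped Kronecker

noncomputable section

private lemma hasDerivAt_energy {n : Type*} [Fintype n] (M : Matrix n n ℝ)
    (f : ℝ → n → ℝ) (f' : n → ℝ) (t : ℝ) (hf : HasDerivAt f f' t) :
    HasDerivAt (fun s => f s ⬝ᵥ M.mulVec (f s))
      (f' ⬝ᵥ M.mulVec (f t) + f t ⬝ᵥ M.mulVec f') t := by
  have hc : ∀ i, HasDerivAt (fun s => f s i) (f' i) t := hasDerivAt_pi.mp hf
  have hmain : HasDerivAt (fun s => ∑ i, f s i * ∑ j, M i j * f s j)
      (∑ i, (f' i * ∑ j, M i j * f t j + f t i * ∑ j, M i j * f' j)) t := by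
    refine HasDerivAt.fun_sum fun i _ => ?_
    exact (hc i).mul (HasDerivAt.fun_sum fun j _ => (hc j).const_mul (M i j))
  have h1 : (fun s => f s ⬝ᵥ M.mulVec (f s)) = fun s => ∑ i, f s i * ∑ j, M i j * f s j := by
    funext s; simp [dotProduct, Matrix.mulVec]
  have h2 : f' ⬝ᵥ M.mulVec (f t) + f t ⬝ᵥ M.mulVec f'
      = ∑ i, (f' i * ∑ j, M i j * f t j + f t i * ∑ j, M i j * f' j) := by
    simp [dotProduct, Matrix.mulVec, Finset.sum_add_distrib]
  rw [h1, h2]; exact hmain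

private lemma dot_mulVec_comm {m n : Type*} [Fintype m] [Fintype n]
    (M : Matrix m n ℝ) (x : m → ℝ) (y : n → ℝ) :
    x ⬝ᵥ M *ᵥ y = y ⬝ᵥ Mᵀ *ᵥ x := by
  rw [Matrix.dotProduct_mulVec, Matrix.mulVec_transpose, dotProduct_comm]

private lemma kron_t {a b c d : Type*} [Fintype a] [Fintype b]
    (A : Matrix a c ℝ) (B : Matrix b d ℝ) : (A ⊗ₖ B)ᵀ = Aᵀ ⊗ₖ Bᵀ := by
  ext ⟨i, j⟩ ⟨k, l⟩
  simp [Matrix.kroneckerMap_apply]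

private lemma kron_neg {a b c d : Type*}
    (A : Matrix a c ℝ) (B : Matrix b d ℝ) : A ⊗ₖ (-B) = -(A ⊗ₖ B) := by
  ext ⟨i, j⟩ ⟨k, l⟩
  simp [Matrix.kroneckerMap_apply]

private lemma vecMulVec_t {a b : Type*} (x : a → ℝ) (y : b → ℝ) :
    (vecMulVec x y)ᵀ = vecMulVec y x := by
  ext i j; simp [vecMulVec, mul_comm]

/-- (Theorem 4: stability of the SBP-FD junction for the advection equation,
nonconforming grids.) With identity operators `I_w^w, I_u^u, I_v^v`, the nonconforming
interpolation operators built from coarse interpolation operators and SBP-preserving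
grid-transfer operators, and penalty parameters `τ_w = -a₂/2`, `τ_{uv} = a₂/2`, every
solution of the SBP-FD junction semi-discretization of `U_t = a₁ U_x + a₂ U_y`
conserves the discrete energy. -/
theorem sbp_fd_junction_advection_nonconforming_stability
    (kw lw ku lu kv lv : ℕ) (a1 a2 : ℝ)
    (Pxw : Matrix (Fin (kw + 1)) (Fin (kw + 1)) ℝ)
    (Pyw : Matrix (Fin (lw + 1)) (Fin (lw + 1)) ℝ)
    (Pxu : Matrix (Fin (ku + 1)) (Fin (ku + 1)) ℝ)
    (Pyu : Matrix (Fin (lu + 1)) (Fin (lu + 1)) ℝ)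
    (Pxv : Matrix (Fin (kv + 1)) (Fin (kv + 1)) ℝ)
    (Pyv : Matrix (Fin (lv + 1)) (Fin (lv + 1)) ℝ)
    (hPxw : Pxw.IsDiag) (hPxwP : Pxw.PosDef)
    (hPyw : Pyw.IsDiag) (hPywP : Pyw.PosDef)
    (hPxu : Pxu.IsDiag) (hPxuP : Pxu.PosDef)
    (hPyu : Pyu.IsDiag) (hPyuP : Pyu.PosDef)
    (hPxv : Pxv.IsDiag) (hPxvP : Pxv.PosDef)
    (hPyv : Pyv.IsDiag) (hPyvP : Pyv.PosDef)
    (Qxw : Matrix (Fin (kw + 1)) (Fin (kw + 1)) ℝ)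
    (Qyw : Matrix (Fin (lw + 1)) (Fin (lw + 1)) ℝ)
    (Qxu : Matrix (Fin (ku + 1)) (Fin (ku + 1)) ℝ)
    (Qyu : Matrix (Fin (lu + 1)) (Fin (lu + 1)) ℝ)
    (Qxv : Matrix (Fin (kv + 1)) (Fin (kv + 1)) ℝ)
    (Qyv : Matrix (Fin (lv + 1)) (Fin (lv + 1)) ℝ)
    (hQxw : Qxw + Qxwᵀ = 0) (hQxu : Qxu + Qxuᵀ = 0) (hQxv : Qxv + Qxvᵀ = 0)
    (hQyw : Qyw + Qywᵀ = -vecMulVec (e0v lw) (e0v lw))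
    (hQyu : Qyu + Qyuᵀ = vecMulVec (eNv lu) (eNv lu))
    (hQyv : Qyv + Qyvᵀ = vecMulVec (eNv lv) (eNv lv))
    (Iww : Matrix (Fin (kw + 1)) (Fin (kw + 1)) ℝ)
    (Iuu : Matrix (Fin (ku + 1)) (Fin (ku + 1)) ℝ)
    (Ivv : Matrix (Fin (kv + 1)) (Fin (kv + 1)) ℝ)
    (hIww : Iww = 1) (hIuu : Iuu = 1) (hIvv : Ivv = 1)
    (mu mv : ℕ)
    (Pcxu : Matrix (Fin (mu + 1)) (Fin (mu + 1)) ℝ)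
    (Pcxv : Matrix (Fin (mv + 1)) (Fin (mv + 1)) ℝ)
    (hPcxu : Pcxu.IsDiag) (hPcxuP : Pcxu.PosDef)
    (hPcxv : Pcxv.IsDiag) (hPcxvP : Pcxv.PosDef)
    (Jwu : Matrix (Fin (mu + 1)) (Fin (kw + 1)) ℝ)
    (Jwv : Matrix (Fin (mv + 1)) (Fin (kw + 1)) ℝ)
    (Jwu' : Matrix (Fin (kw + 1)) (Fin (mu + 1)) ℝ)
    (Jwv' : Matrix (Fin (kw + 1)) (Fin (mv + 1)) ℝ)
    (hJwu' : Jwu' = Pxw⁻¹ * Jwuᵀ * Pcxu)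
    (hJwv' : Jwv' = Pxw⁻¹ * Jwvᵀ * Pcxv)
    (Ic2fu : Matrix (Fin (ku + 1)) (Fin (mu + 1)) ℝ)
    (If2cu : Matrix (Fin (mu + 1)) (Fin (ku + 1)) ℝ)
    (Ic2fv : Matrix (Fin (kv + 1)) (Fin (mv + 1)) ℝ)
    (If2cv : Matrix (Fin (mv + 1)) (Fin (kv + 1)) ℝ)
    (hnormu : Pcxu * If2cu = Ic2fuᵀ * Pxu)
    (hnormv : Pcxv * If2cv = Ic2fvᵀ * Pxv)
    (Iwu : Matrix (Fin (ku + 1)) (Fin (kw + 1)) ℝ)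
    (Iwv : Matrix (Fin (kv + 1)) (Fin (kw + 1)) ℝ)
    (Iwu' : Matrix (Fin (kw + 1)) (Fin (ku + 1)) ℝ)
    (Iwv' : Matrix (Fin (kw + 1)) (Fin (kv + 1)) ℝ)
    (hIwu : Iwu = Ic2fu * Jwu) (hIwv : Iwv = Ic2fv * Jwv)
    (hIwu' : Iwu' = Jwu' * If2cu) (hIwv' : Iwv' = Jwv' * If2cv)
    (τw τuv : ℝ) (hτw : τw = -a2 / 2) (hτuv : τuv = a2 / 2)
    (w : ℝ → (Fin (kw + 1) × Fin (lw + 1) → ℝ))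
    (u : ℝ → (Fin (ku + 1) × Fin (lu + 1) → ℝ))
    (v : ℝ → (Fin (kv + 1) × Fin (lv + 1) → ℝ))
    (hw : ∀ t : ℝ, 0 ≤ t → HasDerivAt w
      ((a1 • ((Pxw⁻¹ * Qxw) ⊗ₖ (1 : Matrix (Fin (lw + 1)) (Fin (lw + 1)) ℝ))
          + a2 • ((1 : Matrix (Fin (kw + 1)) (Fin (kw + 1)) ℝ) ⊗ₖ (Pyw⁻¹ * Qyw))).mulVec (w t)
        - τw • ((1 : Matrix (Fin (kw + 1)) (Fin (kw + 1)) ℝ) ⊗ₖ Pyw⁻¹).mulVec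
            ((Iww ⊗ₖ vecMulVec (e0v lw) (e0v lw)).mulVec (w t)
              - (Iwu' ⊗ₖ vecMulVec (e0v lw) (eNv lu)).mulVec (u t)
              - (Iwv' ⊗ₖ vecMulVec (e0v lw) (eNv lv)).mulVec (v t))) t)
    (hu : ∀ t : ℝ, 0 ≤ t → HasDerivAt u
      ((a1 • ((Pxu⁻¹ * Qxu) ⊗ₖ (1 : Matrix (Fin (lu + 1)) (Fin (lu + 1)) ℝ))
          + a2 • ((1 : Matrix (Fin (ku + 1)) (Fin (ku + 1)) ℝ) ⊗ₖ (Pyu⁻¹ * Qyu))).mulVec (u t)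
        - τuv • ((1 : Matrix (Fin (ku + 1)) (Fin (ku + 1)) ℝ) ⊗ₖ Pyu⁻¹).mulVec
            ((Iuu ⊗ₖ vecMulVec (eNv lu) (eNv lu)).mulVec (u t)
              - (Iwu ⊗ₖ vecMulVec (eNv lu) (e0v lw)).mulVec (w t))) t)
    (hv : ∀ t : ℝ, 0 ≤ t → HasDerivAt v
      ((a1 • ((Pxv⁻¹ * Qxv) ⊗ₖ (1 : Matrix (Fin (lv + 1)) (Fin (lv + 1)) ℝ))
          + a2 • ((1 : Matrix (Fin (kv + 1)) (Fin (kv + 1)) ℝ) ⊗ₖ (Pyv⁻¹ * Qyv))).mulVec (v t)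
        - τuv • ((1 : Matrix (Fin (kv + 1)) (Fin (kv + 1)) ℝ) ⊗ₖ Pyv⁻¹).mulVec
            ((Ivv ⊗ₖ vecMulVec (eNv lv) (eNv lv)).mulVec (v t)
              - (Iwv ⊗ₖ vecMulVec (eNv lv) (e0v lw)).mulVec (w t))) t) :
    ∀ t : ℝ, 0 ≤ t →
      energyR Pxw Pyw (w t) + energyR Pxu Pyu (u t) + energyR Pxv Pyv (v t)
        = energyR Pxw Pyw (w 0) + energyR Pxu Pyu (u 0) + energyR Pxv Pyv (v 0) := by
  subst hIww hIuu hIvv hτw hτuv hIwu hIwv hIwu' hIwv' hJwu' hJwv'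
  -- symmetry of the norm matrices
  have sPxw := hPxw.isSymm.eq
  have sPyw := hPyw.isSymm.eq
  have sPxu := hPxu.isSymm.eq
  have sPyu := hPyu.isSymm.eq
  have sPxv := hPxv.isSymm.eq
  have sPyv := hPyv.isSymm.eq
  -- invertibility
  have dPxw : IsUnit Pxw.det := hPxwP.det_pos.ne'.isUnit
  have dPyw : IsUnit Pyw.det := hPywP.det_pos.ne'.isUnit
  have dPyu : IsUnit Pyu.det := hPyuP.det_pos.ne'.isUnit
  have dPyv : IsUnit Pyv.det := hPyvP.det_pos.ne'.isUnit
  have cxw : Pxw * (Pxw⁻¹ * Qxw) = Qxw := Matrix.mul_nonsing_inv_cancel_left _ _ dPxw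
  have cyw : ∀ {κ : Type} (X : Matrix (Fin (lw + 1)) κ ℝ), Pyw * (Pyw⁻¹ * X) = X :=
    fun X => Matrix.mul_nonsing_inv_cancel_left _ _ dPyw
  have cyu : ∀ {κ : Type} (X : Matrix (Fin (lu + 1)) κ ℝ), Pyu * (Pyu⁻¹ * X) = X :=
    fun X => Matrix.mul_nonsing_inv_cancel_left _ _ dPyu
  have cyv : ∀ {κ : Type} (X : Matrix (Fin (lv + 1)) κ ℝ), Pyv * (Pyv⁻¹ * X) = X :=
    fun X => Matrix.mul_nonsing_inv_cancel_left _ _ dPyv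
  have cxu : Pxu * (Pxu⁻¹ * Qxu) = Qxu :=
    Matrix.mul_nonsing_inv_cancel_left _ _ hPxuP.det_pos.ne'.isUnit
  have cxv : Pxv * (Pxv⁻¹ * Qxv) = Qxv :=
    Matrix.mul_nonsing_inv_cancel_left _ _ hPxvP.det_pos.ne'.isUnit
  have pyw1 : Pyw * Pyw⁻¹ = 1 := Matrix.mul_nonsing_inv _ dPyw
  have pyu1 : Pyu * Pyu⁻¹ = 1 := Matrix.mul_nonsing_inv _ dPyu
  have pyv1 : Pyv * Pyv⁻¹ = 1 := Matrix.mul_nonsing_inv _ dPyv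
  -- the key compatibility of the nonconforming interpolation operators
  have key_u : Pxw * (Pxw⁻¹ * Jwuᵀ * Pcxu * If2cu) = (Ic2fu * Jwu)ᵀ * Pxu := by
    rw [Matrix.transpose_mul]
    simp only [← Matrix.mul_assoc]
    rw [Matrix.mul_nonsing_inv _ dPxw, Matrix.one_mul, Matrix.mul_assoc, hnormu,
      ← Matrix.mul_assoc]
  have key_v : Pxw * (Pxw⁻¹ * Jwvᵀ * Pcxv * If2cv) = (Ic2fv * Jwv)ᵀ * Pxv := by
    rw [Matrix.transpose_mul]
    simp only [← Matrix.mul_assoc]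
    rw [Matrix.mul_nonsing_inv _ dPxw, Matrix.one_mul, Matrix.mul_assoc, hnormv,
      ← Matrix.mul_assoc]
  -- the total energy has zero derivative at every nonnegative time
  have hderivE : ∀ t : ℝ, 0 ≤ t → HasDerivAt
      (fun s => energyR Pxw Pyw (w s) + energyR Pxu Pyu (u s) + energyR Pxv Pyv (v s)) 0 t := by
    intro t ht
    have h1 := hasDerivAt_energy (Pxw ⊗ₖ Pyw) w _ t (hw t ht)
    have h2 := hasDerivAt_energy (Pxu ⊗ₖ Pyu) u _ t (hu t ht)
    have h3 := hasDerivAt_energy (Pxv ⊗ₖ Pyv) v _ t (hv t ht)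
    have hbig := (h1.add h2).add h3
    simp only [energyR]
    refine hbig.congr_deriv (Eq.symm ?_)
    symm
    -- symmetry of the energy matrices
    have flipw : ∀ (x y : Fin (kw + 1) × Fin (lw + 1) → ℝ),
        x ⬝ᵥ (Pxw ⊗ₖ Pyw) *ᵥ y = y ⬝ᵥ (Pxw ⊗ₖ Pyw) *ᵥ x := by
      intro x y; rw [dot_mulVec_comm, kron_t, sPxw, sPyw]
    have flipu : ∀ (x y : Fin (ku + 1) × Fin (lu + 1) → ℝ),
        x ⬝ᵥ (Pxu ⊗ₖ Pyu) *ᵥ y = y ⬝ᵥ (Pxu ⊗ₖ Pyu) *ᵥ x := by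
      intro x y; rw [dot_mulVec_comm, kron_t, sPxu, sPyu]
    have flipv : ∀ (x y : Fin (kv + 1) × Fin (lv + 1) → ℝ),
        x ⬝ᵥ (Pxv ⊗ₖ Pyv) *ᵥ y = y ⬝ᵥ (Pxv ⊗ₖ Pyv) *ᵥ x := by
      intro x y; rw [dot_mulVec_comm, kron_t, sPxv, sPyv]
    rw [flipw, flipu, flipv]
    -- compute the energy matrix applied to each right-hand side
    have hMw : (Pxw ⊗ₖ Pyw) *ᵥ
        ((a1 • ((Pxw⁻¹ * Qxw) ⊗ₖ (1 : Matrix (Fin (lw + 1)) (Fin (lw + 1)) ℝ))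
          + a2 • ((1 : Matrix (Fin (kw + 1)) (Fin (kw + 1)) ℝ) ⊗ₖ (Pyw⁻¹ * Qyw))).mulVec (w t)
        - (-a2 / 2) • ((1 : Matrix (Fin (kw + 1)) (Fin (kw + 1)) ℝ) ⊗ₖ Pyw⁻¹).mulVec
            (((1 : Matrix (Fin (kw + 1)) (Fin (kw + 1)) ℝ)
                ⊗ₖ vecMulVec (e0v lw) (e0v lw)).mulVec (w t)
              - ((Pxw⁻¹ * Jwuᵀ * Pcxu * If2cu) ⊗ₖ vecMulVec (e0v lw) (eNv lu)).mulVec (u t)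
              - ((Pxw⁻¹ * Jwvᵀ * Pcxv * If2cv) ⊗ₖ vecMulVec (e0v lw) (eNv lv)).mulVec (v t)))
      = a1 • ((Qxw ⊗ₖ Pyw) *ᵥ w t) + a2 • ((Pxw ⊗ₖ Qyw) *ᵥ w t)
        - (-a2 / 2) • (((Pxw ⊗ₖ vecMulVec (e0v lw) (e0v lw)) *ᵥ w t)
            - ((((Ic2fu * Jwu)ᵀ * Pxu) ⊗ₖ vecMulVec (e0v lw) (eNv lu)) *ᵥ u t)
            - ((((Ic2fv * Jwv)ᵀ * Pxv) ⊗ₖ vecMulVec (e0v lw) (eNv lv)) *ᵥ v t)) := by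
      simp only [Matrix.mulVec_sub, Matrix.mulVec_add, Matrix.mulVec_smul, Matrix.add_mulVec,
        Matrix.smul_mulVec, Matrix.mulVec_mulVec, ← Matrix.mul_kronecker_mul,
        Matrix.mul_one, Matrix.one_mul, cxw, cyw, pyw1, key_u, key_v]
    have hMu : (Pxu ⊗ₖ Pyu) *ᵥ
        ((a1 • ((Pxu⁻¹ * Qxu) ⊗ₖ (1 : Matrix (Fin (lu + 1)) (Fin (lu + 1)) ℝ))
          + a2 • ((1 : Matrix (Fin (ku + 1)) (Fin (ku + 1)) ℝ) ⊗ₖ (Pyu⁻¹ * Qyu))).mulVec (u t)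
        - (a2 / 2) • ((1 : Matrix (Fin (ku + 1)) (Fin (ku + 1)) ℝ) ⊗ₖ Pyu⁻¹).mulVec
            (((1 : Matrix (Fin (ku + 1)) (Fin (ku + 1)) ℝ)
                ⊗ₖ vecMulVec (eNv lu) (eNv lu)).mulVec (u t)
              - ((Ic2fu * Jwu) ⊗ₖ vecMulVec (eNv lu) (e0v lw)).mulVec (w t)))
      = a1 • ((Qxu ⊗ₖ Pyu) *ᵥ u t) + a2 • ((Pxu ⊗ₖ Qyu) *ᵥ u t)
        - (a2 / 2) • (((Pxu ⊗ₖ vecMulVec (eNv lu) (eNv lu)) *ᵥ u t)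
            - (((Pxu * (Ic2fu * Jwu)) ⊗ₖ vecMulVec (eNv lu) (e0v lw)) *ᵥ w t)) := by
      simp only [Matrix.mulVec_sub, Matrix.mulVec_add, Matrix.mulVec_smul, Matrix.add_mulVec,
        Matrix.smul_mulVec, Matrix.mulVec_mulVec, ← Matrix.mul_kronecker_mul,
        Matrix.mul_one, Matrix.one_mul, cxu, cyu, pyu1]
    have hMv : (Pxv ⊗ₖ Pyv) *ᵥ
        ((a1 • ((Pxv⁻¹ * Qxv) ⊗ₖ (1 : Matrix (Fin (lv + 1)) (Fin (lv + 1)) ℝ))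
          + a2 • ((1 : Matrix (Fin (kv + 1)) (Fin (kv + 1)) ℝ) ⊗ₖ (Pyv⁻¹ * Qyv))).mulVec (v t)
        - (a2 / 2) • ((1 : Matrix (Fin (kv + 1)) (Fin (kv + 1)) ℝ) ⊗ₖ Pyv⁻¹).mulVec
            (((1 : Matrix (Fin (kv + 1)) (Fin (kv + 1)) ℝ)
                ⊗ₖ vecMulVec (eNv lv) (eNv lv)).mulVec (v t)
              - ((Ic2fv * Jwv) ⊗ₖ vecMulVec (eNv lv) (e0v lw)).mulVec (w t)))
      = a1 • ((Qxv ⊗ₖ Pyv) *ᵥ v t) + a2 • ((Pxv ⊗ₖ Qyv) *ᵥ v t)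
        - (a2 / 2) • (((Pxv ⊗ₖ vecMulVec (eNv lv) (eNv lv)) *ᵥ v t)
            - (((Pxv * (Ic2fv * Jwv)) ⊗ₖ vecMulVec (eNv lv) (e0v lw)) *ᵥ w t)) := by
      simp only [Matrix.mulVec_sub, Matrix.mulVec_add, Matrix.mulVec_smul, Matrix.add_mulVec,
        Matrix.smul_mulVec, Matrix.mulVec_mulVec, ← Matrix.mul_kronecker_mul,
        Matrix.mul_one, Matrix.one_mul, cxv, cyv, pyv1]
    rw [hMw, hMu, hMv]
    -- scalar identities
    have hqxw : w t ⬝ᵥ (Qxw ⊗ₖ Pyw) *ᵥ w t + w t ⬝ᵥ (Qxw ⊗ₖ Pyw) *ᵥ w t = 0 := by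
      nth_rewrite 2 [dot_mulVec_comm]
      rw [kron_t, sPyw, ← dotProduct_add, ← Matrix.add_mulVec, ← Matrix.add_kronecker, hQxw,
        Matrix.zero_kronecker, Matrix.zero_mulVec, dotProduct_zero]
    have hqxu : u t ⬝ᵥ (Qxu ⊗ₖ Pyu) *ᵥ u t + u t ⬝ᵥ (Qxu ⊗ₖ Pyu) *ᵥ u t = 0 := by
      nth_rewrite 2 [dot_mulVec_comm]
      rw [kron_t, sPyu, ← dotProduct_add, ← Matrix.add_mulVec, ← Matrix.add_kronecker, hQxu,
        Matrix.zero_kronecker, Matrix.zero_mulVec, dotProduct_zero]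
    have hqxv : v t ⬝ᵥ (Qxv ⊗ₖ Pyv) *ᵥ v t + v t ⬝ᵥ (Qxv ⊗ₖ Pyv) *ᵥ v t = 0 := by
      nth_rewrite 2 [dot_mulVec_comm]
      rw [kron_t, sPyv, ← dotProduct_add, ← Matrix.add_mulVec, ← Matrix.add_kronecker, hQxv,
        Matrix.zero_kronecker, Matrix.zero_mulVec, dotProduct_zero]
    have hqyw : w t ⬝ᵥ (Pxw ⊗ₖ Qyw) *ᵥ w t + w t ⬝ᵥ (Pxw ⊗ₖ Qyw) *ᵥ w t
        = -(w t ⬝ᵥ (Pxw ⊗ₖ vecMulVec (e0v lw) (e0v lw)) *ᵥ w t) := by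
      nth_rewrite 2 [dot_mulVec_comm]
      rw [kron_t, sPxw, ← dotProduct_add, ← Matrix.add_mulVec, ← Matrix.kronecker_add, hQyw,
        kron_neg, Matrix.neg_mulVec, dotProduct_neg]
    have hqyu : u t ⬝ᵥ (Pxu ⊗ₖ Qyu) *ᵥ u t + u t ⬝ᵥ (Pxu ⊗ₖ Qyu) *ᵥ u t
        = u t ⬝ᵥ (Pxu ⊗ₖ vecMulVec (eNv lu) (eNv lu)) *ᵥ u t := by
      nth_rewrite 2 [dot_mulVec_comm]
      rw [kron_t, sPxu, ← dotProduct_add, ← Matrix.add_mulVec, ← Matrix.kronecker_add, hQyu]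
    have hqyv : v t ⬝ᵥ (Pxv ⊗ₖ Qyv) *ᵥ v t + v t ⬝ᵥ (Pxv ⊗ₖ Qyv) *ᵥ v t
        = v t ⬝ᵥ (Pxv ⊗ₖ vecMulVec (eNv lv) (eNv lv)) *ᵥ v t := by
      nth_rewrite 2 [dot_mulVec_comm]
      rw [kron_t, sPxv, ← dotProduct_add, ← Matrix.add_mulVec, ← Matrix.kronecker_add, hQyv]
    have hcu : w t ⬝ᵥ ((((Ic2fu * Jwu)ᵀ * Pxu) ⊗ₖ vecMulVec (e0v lw) (eNv lu)) *ᵥ u t)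
        = u t ⬝ᵥ (((Pxu * (Ic2fu * Jwu)) ⊗ₖ vecMulVec (eNv lu) (e0v lw)) *ᵥ w t) := by
      rw [dot_mulVec_comm, kron_t, Matrix.transpose_mul, Matrix.transpose_transpose, sPxu,
        vecMulVec_t]
    have hcv : w t ⬝ᵥ ((((Ic2fv * Jwv)ᵀ * Pxv) ⊗ₖ vecMulVec (e0v lw) (eNv lv)) *ᵥ v t)
        = v t ⬝ᵥ (((Pxv * (Ic2fv * Jwv)) ⊗ₖ vecMulVec (eNv lv) (e0v lw)) *ᵥ w t) := by
      rw [dot_mulVec_comm, kron_t, Matrix.transpose_mul, Matrix.transpose_transpose, sPxv,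
        vecMulVec_t]
    simp only [dotProduct_add, dotProduct_sub, dotProduct_smul, smul_eq_mul]
    linear_combination a1 * hqxw + a2 * hqyw + a1 * hqxu + a2 * hqyu + a1 * hqxv + a2 * hqyv
      - a2 * hcu - a2 * hcv
  -- conclude by the constancy theorem
  intro T hT
  have key := constant_of_has_deriv_right_zero
    (f := fun s => energyR Pxw Pyw (w s) + energyR Pxu Pyu (u s) + energyR Pxv Pyv (v s))
    (a := 0) (b := T)
    (fun x hx => ((hderivE x hx.1).continuousAt).continuousWithinAt)
    (fun x hx => ((hderivE x hx.1).hasDerivWithinAt))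
  exact key T ⟨hT, le_rfl⟩


end
end

section
/- (Energy rate identity for the advection semi-discretization, from the proof of Theorem 3) Suppose that in the SBP-FD junction semi-discretization of the advection equation the operators I_w^w, I_u^u, I_v^v are identity matrices, while a_1, a_2, τ_w, τ_{uv} ∈ ℝ and the interpolation matrices I_w^u, I_w^v, I^{w,u}, I^{w,v} are arbitrary. Let w, u, v be differentiable functions satisfying the semi-discrete system for all t ≥ 0, and define the interface traces w_0(t) = (I_{x,w}⊗e_{0,w}^T) w(t) ∈ ℝ^{n_{x,w}}, u_N(t) = (I_{x,u}⊗e_{N,u}^T) u(t) ∈ ℝ^{n_{x,u}}, v_N(t) = (I_{x,v}⊗e_{N,v}^T) v(t) ∈ ℝ^{n_{x,v}}. Then for all t ≥ 0: d/dt [‖w(t)‖²_{P_w} + ‖u(t)‖²_{P_u} + ‖v(t)‖²_{P_v}] = (−a_2 − 2τ_w) w_0^T P_{x,w} w_0 + (a_2 − 2τ_{uv}) (u_N^T P_{x,u} u_N + v_N^T P_{x,v} v_N) + 2τ_w w_0^T P_{x,w} (I^{w,u} u_N + I^{w,v} v_N) + 2τ_{uv} (u_N^T P_{x,u} I_w^u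 w_0 + v_N^T P_{x,v} I_w^v w_0). -/
open Matrix
open scoped Kronecker

noncomputable section

/-- The interface trace `(I_x ⊗ e₀ᵀ) f` of a grid function. -/
def trace0 {a : Type*} {l : ℕ} (f : a × Fin (l + 1) → ℝ) : a → ℝ :=
  fun i => ∑ j, e0v l j * f (i, j)

/-- The interface trace `(I_x ⊗ e_Nᵀ) f` of a grid function. -/
def traceN {a : Type*} {l : ℕ} (f : a × Fin (l + 1) → ℝ) : a → ℝ :=
  fun i => ∑ j, eNv l j * f (i, j)


lemma quad_transpose' {n : Type*} [Fintype n] (A : Matrix n n ℝ) (x : n → ℝ) :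
    dotProduct x (Aᵀ.mulVec x) = dotProduct x (A.mulVec x) := by
  rw [Matrix.mulVec_transpose, dotProduct_comm, Matrix.dotProduct_mulVec]

lemma quad_add_transpose' {n : Type*} [Fintype n] (A : Matrix n n ℝ) (x : n → ℝ) :
    2 * dotProduct x (A.mulVec x) = dotProduct x ((A + Aᵀ).mulVec x) := by
  rw [Matrix.add_mulVec, dotProduct_add, quad_transpose']; ring

lemma deriv_sym' {n : Type*} [Fintype n] (M : Matrix n n ℝ) (hM : Mᵀ = M) (x y : n → ℝ) :
    dotProduct y (M.mulVec x) + dotProduct x (M.mulVec y) = 2 * dotProduct x (M.mulVec y) := by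
  rw [Matrix.dotProduct_mulVec y M x, ← Matrix.mulVec_transpose, hM, dotProduct_comm]; ring

lemma kronecker_neg' {l m n p : Type*} (A : Matrix l m ℝ) (B : Matrix n p ℝ) :
    A ⊗ₖ (-B) = -(A ⊗ₖ B) := by
  rw [← neg_one_smul ℝ B, Matrix.kronecker_smul, neg_one_smul]

lemma kronQuad' {a b a' b' : Type*} [Fintype a] [Fintype b] [Fintype a'] [Fintype b']
    (B : Matrix a a' ℝ) (p : b → ℝ) (q : b' → ℝ) (f : a × b → ℝ) (g : a' × b' → ℝ) :
    dotProduct f ((B ⊗ₖ vecMulVec p q).mulVec g)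
      = dotProduct (fun i => ∑ j, p j * f (i, j)) (B.mulVec fun i => ∑ j, q j * g (i, j)) := by
  simp only [dotProduct, Matrix.mulVec, Matrix.kroneckerMap_apply, Matrix.vecMulVec_apply,
    Fintype.sum_prod_type, Finset.sum_mul, Finset.mul_sum]
  refine Finset.sum_congr rfl fun i _ => ?_
  rw [Finset.sum_comm]
  refine Finset.sum_congr rfl fun i' _ => ?_
  rw [Finset.sum_comm]
  refine Finset.sum_congr rfl fun j _ => Finset.sum_congr rfl fun j' _ => by ring

lemma hasDerivAt_quadForm' {n : Type*} [Fintype n] (M : Matrix n n ℝ)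
    (f : ℝ → n → ℝ) (f' : n → ℝ) (t : ℝ) (hf : HasDerivAt f f' t) :
    HasDerivAt (fun s => dotProduct (f s) (M.mulVec (f s)))
      (dotProduct f' (M.mulVec (f t)) + dotProduct (f t) (M.mulVec f')) t := by
  have hc : ∀ i, HasDerivAt (fun s => f s i) (f' i) t := fun i => hasDerivAt_pi.mp hf i
  have key : HasDerivAt (fun s => ∑ i, f s i * ∑ j, M i j * f s j)
      (∑ i, (f' i * ∑ j, M i j * f t j + f t i * ∑ j, M i j * f' j)) t := by
    refine HasDerivAt.fun_sum fun i _ => ?_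
    exact (hc i).mul (HasDerivAt.fun_sum fun j _ => (hc j).const_mul (M i j))
  convert key using 1
  simp [dotProduct, Matrix.mulVec, Finset.sum_add_distrib]
  simp [dotProduct, Matrix.mulVec, Finset.sum_add_distrib]

lemma blockW' {aw bw au bu av bv : Type*}
    [Fintype aw] [Fintype bw] [Fintype au] [Fintype bu] [Fintype av] [Fintype bv]
    [DecidableEq aw] [DecidableEq bw]
    (a1 a2 τ : ℝ)
    (Px : Matrix aw aw ℝ) (Py : Matrix bw bw ℝ)
    (hPxs : Pxᵀ = Px) (hPys : Pyᵀ = Py)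
    (hPxi : Px * Px⁻¹ = 1) (hPyi : Py * Py⁻¹ = 1)
    (Qx : Matrix aw aw ℝ) (Qy : Matrix bw bw ℝ)
    (hQx : Qx + Qxᵀ = 0) (p : bw → ℝ) (hQy : Qy + Qyᵀ = -vecMulVec p p)
    (B1 : Matrix aw au ℝ) (q1 : bu → ℝ) (B2 : Matrix aw av ℝ) (q2 : bv → ℝ)
    (f : aw × bw → ℝ) (g1 : au × bu → ℝ) (g2 : av × bv → ℝ) :
    dotProduct
        ((a1 • ((Px⁻¹ * Qx) ⊗ₖ (1 : Matrix bw bw ℝ))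
            + a2 • ((1 : Matrix aw aw ℝ) ⊗ₖ (Py⁻¹ * Qy))).mulVec f
          - τ • ((1 : Matrix aw aw ℝ) ⊗ₖ Py⁻¹).mulVec
              (((1 : Matrix aw aw ℝ) ⊗ₖ vecMulVec p p).mulVec f
                - (B1 ⊗ₖ vecMulVec p q1).mulVec g1
                - (B2 ⊗ₖ vecMulVec p q2).mulVec g2))
        ((Px ⊗ₖ Py).mulVec f)
      + dotProduct f ((Px ⊗ₖ Py).mulVec
        ((a1 • ((Px⁻¹ * Qx) ⊗ₖ (1 : Matrix bw bw ℝ))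
            + a2 • ((1 : Matrix aw aw ℝ) ⊗ₖ (Py⁻¹ * Qy))).mulVec f
          - τ • ((1 : Matrix aw aw ℝ) ⊗ₖ Py⁻¹).mulVec
              (((1 : Matrix aw aw ℝ) ⊗ₖ vecMulVec p p).mulVec f
                - (B1 ⊗ₖ vecMulVec p q1).mulVec g1
                - (B2 ⊗ₖ vecMulVec p q2).mulVec g2)))
      = (-a2 - 2 * τ) * dotProduct (fun i => ∑ j, p j * f (i, j))
            (Px.mulVec fun i => ∑ j, p j * f (i, j))
        + 2 * τ * (dotProduct (fun i => ∑ j, p j * f (i, j))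
              (Px.mulVec (B1.mulVec fun i => ∑ j, q1 j * g1 (i, j)))
            + dotProduct (fun i => ∑ j, p j * f (i, j))
              (Px.mulVec (B2.mulVec fun i => ∑ j, q2 j * g2 (i, j)))) := by
  have hMs : (Px ⊗ₖ Py)ᵀ = Px ⊗ₖ Py := by
    rw [← Matrix.kroneckerMap_transpose, hPxs, hPys]
  rw [deriv_sym' _ hMs]
  have hqx : Px * (Px⁻¹ * Qx) = Qx := by rw [← Matrix.mul_assoc, hPxi, Matrix.one_mul]
  have hqy : Py * (Py⁻¹ * Qy) = Qy := by rw [← Matrix.mul_assoc, hPyi, Matrix.one_mul]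
  have hpp : Py * (Py⁻¹ * vecMulVec p p) = vecMulVec p p := by
    rw [← Matrix.mul_assoc, hPyi, Matrix.one_mul]
  have hpq1 : Py * (Py⁻¹ * vecMulVec p q1) = vecMulVec p q1 := by
    rw [← Matrix.mul_assoc, hPyi, Matrix.one_mul]
  have hpq2 : Py * (Py⁻¹ * vecMulVec p q2) = vecMulVec p q2 := by
    rw [← Matrix.mul_assoc, hPyi, Matrix.one_mul]
  simp only [Matrix.add_mulVec, Matrix.smul_mulVec, Matrix.mulVec_add, Matrix.mulVec_sub,
    Matrix.mulVec_smul, dotProduct_add, dotProduct_sub, dotProduct_smul, smul_eq_mul,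
    Matrix.mulVec_mulVec, ← Matrix.mul_kronecker_mul, Matrix.mul_one, Matrix.one_mul,
    hqx, hqy, hPyi, hpp, hpq1, hpq2]
  have h1 : 2 * dotProduct f ((Qx ⊗ₖ Py).mulVec f) = 0 := by
    rw [quad_add_transpose', ← Matrix.kroneckerMap_transpose, hPys,
      ← Matrix.add_kronecker, hQx, Matrix.zero_kronecker, Matrix.zero_mulVec, dotProduct_zero]
  have h2 : 2 * dotProduct f ((Px ⊗ₖ Qy).mulVec f)
      = -dotProduct f ((Px ⊗ₖ vecMulVec p p).mulVec f) := by
    rw [quad_add_transpose', ← Matrix.kroneckerMap_transpose, hPxs,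
      ← Matrix.kronecker_add, hQy, kronecker_neg', Matrix.neg_mulVec, dotProduct_neg]
  have h3 := kronQuad' Px p p f f
  have h4 : dotProduct f (((Px * B1) ⊗ₖ vecMulVec p q1).mulVec g1)
      = dotProduct (fun i => ∑ j, p j * f (i, j))
          ((Px * B1).mulVec fun i => ∑ j, q1 j * g1 (i, j)) := by
    rw [kronQuad']
  have h5 : dotProduct f (((Px * B2) ⊗ₖ vecMulVec p q2).mulVec g2)
      = dotProduct (fun i => ∑ j, p j * f (i, j))
          ((Px * B2).mulVec fun i => ∑ j, q2 j * g2 (i, j)) := by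
    rw [kronQuad']
  linear_combination a1 * h1 + a2 * h2 + (-a2 - 2 * τ) * h3 + 2 * τ * h4 + 2 * τ * h5

lemma blockUV' {au bu aw bw : Type*}
    [Fintype au] [Fintype bu] [Fintype aw] [Fintype bw]
    [DecidableEq au] [DecidableEq bu]
    (a1 a2 τ : ℝ)
    (Px : Matrix au au ℝ) (Py : Matrix bu bu ℝ)
    (hPxs : Pxᵀ = Px) (hPys : Pyᵀ = Py)
    (hPxi : Px * Px⁻¹ = 1) (hPyi : Py * Py⁻¹ = 1)
    (Qx : Matrix au au ℝ) (Qy : Matrix bu bu ℝ)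
    (hQx : Qx + Qxᵀ = 0) (p : bu → ℝ) (hQy : Qy + Qyᵀ = vecMulVec p p)
    (B : Matrix au aw ℝ) (q : bw → ℝ)
    (f : au × bu → ℝ) (g : aw × bw → ℝ) :
    dotProduct
        ((a1 • ((Px⁻¹ * Qx) ⊗ₖ (1 : Matrix bu bu ℝ))
            + a2 • ((1 : Matrix au au ℝ) ⊗ₖ (Py⁻¹ * Qy))).mulVec f
          - τ • ((1 : Matrix au au ℝ) ⊗ₖ Py⁻¹).mulVec
              (((1 : Matrix au au ℝ) ⊗ₖ vecMulVec p p).mulVec f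
                - (B ⊗ₖ vecMulVec p q).mulVec g))
        ((Px ⊗ₖ Py).mulVec f)
      + dotProduct f ((Px ⊗ₖ Py).mulVec
        ((a1 • ((Px⁻¹ * Qx) ⊗ₖ (1 : Matrix bu bu ℝ))
            + a2 • ((1 : Matrix au au ℝ) ⊗ₖ (Py⁻¹ * Qy))).mulVec f
          - τ • ((1 : Matrix au au ℝ) ⊗ₖ Py⁻¹).mulVec
              (((1 : Matrix au au ℝ) ⊗ₖ vecMulVec p p).mulVec f
                - (B ⊗ₖ vecMulVec p q).mulVec g)))
      = (a2 - 2 * τ) * dotProduct (fun i => ∑ j, p j * f (i, j))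
            (Px.mulVec fun i => ∑ j, p j * f (i, j))
        + 2 * τ * dotProduct (fun i => ∑ j, p j * f (i, j))
            (Px.mulVec (B.mulVec fun i => ∑ j, q j * g (i, j))) := by
  have hMs : (Px ⊗ₖ Py)ᵀ = Px ⊗ₖ Py := by
    rw [← Matrix.kroneckerMap_transpose, hPxs, hPys]
  rw [deriv_sym' _ hMs]
  have hqx : Px * (Px⁻¹ * Qx) = Qx := by rw [← Matrix.mul_assoc, hPxi, Matrix.one_mul]
  have hqy : Py * (Py⁻¹ * Qy) = Qy := by rw [← Matrix.mul_assoc, hPyi, Matrix.one_mul]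
  have hpp : Py * (Py⁻¹ * vecMulVec p p) = vecMulVec p p := by
    rw [← Matrix.mul_assoc, hPyi, Matrix.one_mul]
  have hpq : Py * (Py⁻¹ * vecMulVec p q) = vecMulVec p q := by
    rw [← Matrix.mul_assoc, hPyi, Matrix.one_mul]
  simp only [Matrix.add_mulVec, Matrix.smul_mulVec, Matrix.mulVec_add, Matrix.mulVec_sub,
    Matrix.mulVec_smul, dotProduct_add, dotProduct_sub, dotProduct_smul, smul_eq_mul,
    Matrix.mulVec_mulVec, ← Matrix.mul_kronecker_mul, Matrix.mul_one, Matrix.one_mul,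
    hqx, hqy, hPyi, hpp, hpq]
  have h1 : 2 * dotProduct f ((Qx ⊗ₖ Py).mulVec f) = 0 := by
    rw [quad_add_transpose', ← Matrix.kroneckerMap_transpose, hPys,
      ← Matrix.add_kronecker, hQx, Matrix.zero_kronecker, Matrix.zero_mulVec, dotProduct_zero]
  have h2 : 2 * dotProduct f ((Px ⊗ₖ Qy).mulVec f)
      = dotProduct f ((Px ⊗ₖ vecMulVec p p).mulVec f) := by
    rw [quad_add_transpose', ← Matrix.kroneckerMap_transpose, hPxs,
      ← Matrix.kronecker_add, hQy]
  have h3 := kronQuad' Px p p f f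
  have h4 : dotProduct f (((Px * B) ⊗ₖ vecMulVec p q).mulVec g)
      = dotProduct (fun i => ∑ j, p j * f (i, j))
          ((Px * B).mulVec fun i => ∑ j, q j * g (i, j)) := by
    rw [kronQuad']
  linear_combination a1 * h1 + a2 * h2 + (a2 - 2 * τ) * h3 + 2 * τ * h4

/-- (Energy rate identity for the advection semi-discretization, from the proof of
Theorem 3.) With identity operators `I_w^w, I_u^u, I_v^v` and arbitrary penalty
parameters and interpolation matrices, the time derivative of the discrete energy
equals the stated quadratic form in the interface traces. -/
theorem sbp_fd_junction_advection_energy_rate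
    (kw lw ku lu kv lv : ℕ) (a1 a2 : ℝ)
    (Pxw : Matrix (Fin (kw + 1)) (Fin (kw + 1)) ℝ)
    (Pyw : Matrix (Fin (lw + 1)) (Fin (lw + 1)) ℝ)
    (Pxu : Matrix (Fin (ku + 1)) (Fin (ku + 1)) ℝ)
    (Pyu : Matrix (Fin (lu + 1)) (Fin (lu + 1)) ℝ)
    (Pxv : Matrix (Fin (kv + 1)) (Fin (kv + 1)) ℝ)
    (Pyv : Matrix (Fin (lv + 1)) (Fin (lv + 1)) ℝ)
    (hPxw : Pxw.IsDiag) (hPxwP : Pxw.PosDef)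
    (hPyw : Pyw.IsDiag) (hPywP : Pyw.PosDef)
    (hPxu : Pxu.IsDiag) (hPxuP : Pxu.PosDef)
    (hPyu : Pyu.IsDiag) (hPyuP : Pyu.PosDef)
    (hPxv : Pxv.IsDiag) (hPxvP : Pxv.PosDef)
    (hPyv : Pyv.IsDiag) (hPyvP : Pyv.PosDef)
    (Qxw : Matrix (Fin (kw + 1)) (Fin (kw + 1)) ℝ)
    (Qyw : Matrix (Fin (lw + 1)) (Fin (lw + 1)) ℝ)
    (Qxu : Matrix (Fin (ku + 1)) (Fin (ku + 1)) ℝ)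
    (Qyu : Matrix (Fin (lu + 1)) (Fin (lu + 1)) ℝ)
    (Qxv : Matrix (Fin (kv + 1)) (Fin (kv + 1)) ℝ)
    (Qyv : Matrix (Fin (lv + 1)) (Fin (lv + 1)) ℝ)
    (hQxw : Qxw + Qxwᵀ = 0) (hQxu : Qxu + Qxuᵀ = 0) (hQxv : Qxv + Qxvᵀ = 0)
    (hQyw : Qyw + Qywᵀ = -vecMulVec (e0v lw) (e0v lw))
    (hQyu : Qyu + Qyuᵀ = vecMulVec (eNv lu) (eNv lu))
    (hQyv : Qyv + Qyvᵀ = vecMulVec (eNv lv) (eNv lv))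
    (Iww : Matrix (Fin (kw + 1)) (Fin (kw + 1)) ℝ)
    (Iuu : Matrix (Fin (ku + 1)) (Fin (ku + 1)) ℝ)
    (Ivv : Matrix (Fin (kv + 1)) (Fin (kv + 1)) ℝ)
    (hIww : Iww = 1) (hIuu : Iuu = 1) (hIvv : Ivv = 1)
    (Iwu : Matrix (Fin (ku + 1)) (Fin (kw + 1)) ℝ)
    (Iwv : Matrix (Fin (kv + 1)) (Fin (kw + 1)) ℝ)
    (Iwu' : Matrix (Fin (kw + 1)) (Fin (ku + 1)) ℝ)
    (Iwv' : Matrix (Fin (kw + 1)) (Fin (kv + 1)) ℝ)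
    (τw τuv : ℝ)
    (w : ℝ → (Fin (kw + 1) × Fin (lw + 1) → ℝ))
    (u : ℝ → (Fin (ku + 1) × Fin (lu + 1) → ℝ))
    (v : ℝ → (Fin (kv + 1) × Fin (lv + 1) → ℝ))
    (hw : ∀ t : ℝ, 0 ≤ t → HasDerivAt w
      ((a1 • ((Pxw⁻¹ * Qxw) ⊗ₖ (1 : Matrix (Fin (lw + 1)) (Fin (lw + 1)) ℝ))
          + a2 • ((1 : Matrix (Fin (kw + 1)) (Fin (kw + 1)) ℝ) ⊗ₖ (Pyw⁻¹ * Qyw))).mulVec (w t)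
        - τw • ((1 : Matrix (Fin (kw + 1)) (Fin (kw + 1)) ℝ) ⊗ₖ Pyw⁻¹).mulVec
            ((Iww ⊗ₖ vecMulVec (e0v lw) (e0v lw)).mulVec (w t)
              - (Iwu' ⊗ₖ vecMulVec (e0v lw) (eNv lu)).mulVec (u t)
              - (Iwv' ⊗ₖ vecMulVec (e0v lw) (eNv lv)).mulVec (v t))) t)
    (hu : ∀ t : ℝ, 0 ≤ t → HasDerivAt u
      ((a1 • ((Pxu⁻¹ * Qxu) ⊗ₖ (1 : Matrix (Fin (lu + 1)) (Fin (lu + 1)) ℝ))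
          + a2 • ((1 : Matrix (Fin (ku + 1)) (Fin (ku + 1)) ℝ) ⊗ₖ (Pyu⁻¹ * Qyu))).mulVec (u t)
        - τuv • ((1 : Matrix (Fin (ku + 1)) (Fin (ku + 1)) ℝ) ⊗ₖ Pyu⁻¹).mulVec
            ((Iuu ⊗ₖ vecMulVec (eNv lu) (eNv lu)).mulVec (u t)
              - (Iwu ⊗ₖ vecMulVec (eNv lu) (e0v lw)).mulVec (w t))) t)
    (hv : ∀ t : ℝ, 0 ≤ t → HasDerivAt v
      ((a1 • ((Pxv⁻¹ * Qxv) ⊗ₖ (1 : Matrix (Fin (lv + 1)) (Fin (lv + 1)) ℝ))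
          + a2 • ((1 : Matrix (Fin (kv + 1)) (Fin (kv + 1)) ℝ) ⊗ₖ (Pyv⁻¹ * Qyv))).mulVec (v t)
        - τuv • ((1 : Matrix (Fin (kv + 1)) (Fin (kv + 1)) ℝ) ⊗ₖ Pyv⁻¹).mulVec
            ((Ivv ⊗ₖ vecMulVec (eNv lv) (eNv lv)).mulVec (v t)
              - (Iwv ⊗ₖ vecMulVec (eNv lv) (e0v lw)).mulVec (w t))) t) :
    ∀ t : ℝ, 0 ≤ t →
      HasDerivAt
        (fun s => energyR Pxw Pyw (w s) + energyR Pxu Pyu (u s) + energyR Pxv Pyv (v s))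
        ((-a2 - 2 * τw) * dotProduct (trace0 (w t)) (Pxw.mulVec (trace0 (w t)))
          + (a2 - 2 * τuv) *
              (dotProduct (traceN (u t)) (Pxu.mulVec (traceN (u t)))
                + dotProduct (traceN (v t)) (Pxv.mulVec (traceN (v t))))
          + 2 * τw *
              dotProduct (trace0 (w t))
                (Pxw.mulVec (Iwu'.mulVec (traceN (u t)) + Iwv'.mulVec (traceN (v t))))
          + 2 * τuv *
              (dotProduct (traceN (u t)) (Pxu.mulVec (Iwu.mulVec (trace0 (w t))))
                + dotProduct (traceN (v t)) (Pxv.mulVec (Iwv.mulVec (trace0 (w t))))))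
        t := by
  intro t ht
  subst hIww hIuu hIvv
  have hPxws : Pxwᵀ = Pxw := hPxw.isSymm
  have hPyws : Pywᵀ = Pyw := hPyw.isSymm
  have hPxus : Pxuᵀ = Pxu := hPxu.isSymm
  have hPyus : Pyuᵀ = Pyu := hPyu.isSymm
  have hPxvs : Pxvᵀ = Pxv := hPxv.isSymm
  have hPyvs : Pyvᵀ = Pyv := hPyv.isSymm
  have hPxwi : Pxw * Pxw⁻¹ = 1 := Matrix.mul_nonsing_inv _ (isUnit_iff_ne_zero.mpr hPxwP.det_pos.ne')
  have hPywi : Pyw * Pyw⁻¹ = 1 := Matrix.mul_nonsing_inv _ (isUnit_iff_ne_zero.mpr hPywP.det_pos.ne')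
  have hPxui : Pxu * Pxu⁻¹ = 1 := Matrix.mul_nonsing_inv _ (isUnit_iff_ne_zero.mpr hPxuP.det_pos.ne')
  have hPyui : Pyu * Pyu⁻¹ = 1 := Matrix.mul_nonsing_inv _ (isUnit_iff_ne_zero.mpr hPyuP.det_pos.ne')
  have hPxvi : Pxv * Pxv⁻¹ = 1 := Matrix.mul_nonsing_inv _ (isUnit_iff_ne_zero.mpr hPxvP.det_pos.ne')
  have hPyvi : Pyv * Pyv⁻¹ = 1 := Matrix.mul_nonsing_inv _ (isUnit_iff_ne_zero.mpr hPyvP.det_pos.ne')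
  refine HasDerivAt.congr_deriv
    (((hasDerivAt_quadForm' (Pxw ⊗ₖ Pyw) w _ t (hw t ht)).add
      (hasDerivAt_quadForm' (Pxu ⊗ₖ Pyu) u _ t (hu t ht))).add
      (hasDerivAt_quadForm' (Pxv ⊗ₖ Pyv) v _ t (hv t ht))) ?_
  have e1 := blockW' a1 a2 τw Pxw Pyw hPxws hPyws hPxwi hPywi Qxw Qyw hQxw (e0v lw) hQyw
    Iwu' (eNv lu) Iwv' (eNv lv) (w t) (u t) (v t)
  have e2 := blockUV' a1 a2 τuv Pxu Pyu hPxus hPyus hPxui hPyui Qxu Qyu hQxu (eNv lu) hQyu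
    Iwu (e0v lw) (u t) (w t)
  have e3 := blockUV' a1 a2 τuv Pxv Pyv hPxvs hPyvs hPxvi hPyvi Qxv Qyv hQxv (eNv lv) hQyv
    Iwv (e0v lw) (v t) (w t)
  rw [e1, e2, e3]
  have tw : trace0 (w t) = fun i => ∑ j, e0v lw j * w t (i, j) := rfl
  have tu : traceN (u t) = fun i => ∑ j, eNv lu j * u t (i, j) := rfl
  have tv : traceN (v t) = fun i => ∑ j, eNv lv j * v t (i, j) := rfl
  simp only [tw, tu, tv, Matrix.mulVec_add, dotProduct_add]
  ring

end
end
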